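/- (Necessary and sufficient conditions for aggregated transportation-expansion Braess' paradox: derivative formulas in β̂.) Let K ≥ 1, let ᾱ ∈ ℝ^{K×K} be symmetric, Q̂ ∈ ℝ^K with all entries positive, ρ > 0, μ̂ ∈ ℝ^K, f̂ ∈ ℝ^K, and suppose Γ := ᾱ + ρ²·diag(Q̂) is invertible with D := 1ᵀΓ⁻¹1 ≠ 0; set B̂_ul⁻¹ := Γ⁻¹ − D⁻¹Γ⁻¹11ᵀΓ⁻¹. For β̂ ∈ ℝ^K let x̂(β̂) := −B̂_ul⁻¹·(β̂ + ρ·diag(Q̂)·f̂ + ρ·μ̂) + D⁻¹·Γ⁻¹1, λ̂(β̂) := diag(Q̂)·(ρ·x̂(β̂) + f̂) + μ̂, Φ_T(β̂) := x̂(β̂)ᵀᾱ·x̂(β̂) + β̂ᵀx̂(β̂), and Φ_P(β̂) := ∑_k [ (1/2)·Q̂_k·(ρ·x̂_k(β̂) + f̂_k)² + μ̂_k·(ρ·x̂_k(β̂) + f̂_k) ]. Then for every k, Φ_T and Φ_P are differentiable in β̂ with ∂Φ_T/∂β̂_k = x̂_k(β̂) − (2·ᾱ·x̂(β̂) + β̂)ᵀ·B̂_ul⁻¹·e_k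 and ∂Φ_P/∂β̂_k = −ρ·λ̂(β̂)ᵀ·B̂_ul⁻¹·e_k, where e_k is the k-th standard basis vector. -/

import Mathlib

open Matrix

/-- Aggregated coupled system: partial derivatives of the transportation and power social
costs with respect to the aggregated fixed travel costs `β̂_k`:
`∂Φ_T/∂β̂_k = x̂_k − (2ᾱx̂ + β̂)ᵀ B̂_ul⁻¹ e_k` and `∂Φ_P/∂β̂_k = −ρ λ̂ᵀ B̂_ul⁻¹ e_k`. -/
theorem ATBP_beta_derivatives {K : ℕ} (hK : 1 ≤ K)
    (abar : Matrix (Fin K) (Fin K) ℝ) (habar : abarᵀ = abar)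
    (Qhat : Fin K → ℝ) (hQ : ∀ k, 0 < Qhat k)
    (ρ : ℝ) (hρ : 0 < ρ)
    (muhat fhat : Fin K → ℝ)
    (hΓ : IsUnit (abar + ρ ^ 2 • Matrix.diagonal Qhat))
    (hD : (1 : Fin K → ℝ) ⬝ᵥ (abar + ρ ^ 2 • Matrix.diagonal Qhat)⁻¹.mulVec 1 ≠ 0) :
    let Γ : Matrix (Fin K) (Fin K) ℝ := abar + ρ ^ 2 • Matrix.diagonal Qhat
    let D : ℝ := (1 : Fin K → ℝ) ⬝ᵥ Γ⁻¹.mulVec 1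
    let onesKK : Matrix (Fin K) (Fin K) ℝ := Matrix.of fun _ _ => (1 : ℝ)
    let Bul : Matrix (Fin K) (Fin K) ℝ := Γ⁻¹ - D⁻¹ • (Γ⁻¹ * onesKK * Γ⁻¹)
    let xhat : (Fin K → ℝ) → Fin K → ℝ := fun bh =>
      -(Bul.mulVec (bh + ρ • (Matrix.diagonal Qhat).mulVec fhat + ρ • muhat)) +
        D⁻¹ • Γ⁻¹.mulVec 1
    let lamhat : (Fin K → ℝ) → Fin K → ℝ := fun bh =>
      (Matrix.diagonal Qhat).mulVec (ρ • xhat bh + fhat) + muhat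
    let ΦT : (Fin K → ℝ) → ℝ := fun bh =>
      xhat bh ⬝ᵥ abar.mulVec (xhat bh) + bh ⬝ᵥ xhat bh
    let ΦP : (Fin K → ℝ) → ℝ := fun bh =>
      ∑ k, ((1 / 2) * Qhat k * (ρ * xhat bh k + fhat k) ^ 2 +
        muhat k * (ρ * xhat bh k + fhat k))
    ∀ (bh : Fin K → ℝ) (k : Fin K),
      HasDerivAt (fun t : ℝ => ΦT (Function.update bh k t))
        (xhat bh k -
          ((2 : ℝ) • abar.mulVec (xhat bh) + bh) ⬝ᵥ Bul.mulVec (Pi.single k 1)) (bh k) ∧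
      HasDerivAt (fun t : ℝ => ΦP (Function.update bh k t))
        (-(ρ * (lamhat bh ⬝ᵥ Bul.mulVec (Pi.single k 1)))) (bh k) := by

  intro Γ D onesKK Bul xhat lamhat ΦT ΦP bh k
  have quadDeriv : ∀ a b d c : ℝ,
      HasDerivAt (fun t : ℝ => a*(t-c)^2 + b*(t-c) + d) b c := by
    intro a b d c
    have h1 : HasDerivAt (fun t : ℝ => t - c) 1 c := (hasDerivAt_id c).sub_const c
    have h2 := (((h1.pow 2).const_mul a).add (h1.const_mul b)).add_const d
    refine h2.congr_deriv ?_
    simp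
  set v := Bul.mulVec (Pi.single k 1) with hv
  set x0 := xhat bh with hx0
  set c := bh k with hc
  have hb : ∀ t : ℝ, Function.update bh k t = bh + (t - c) • (Pi.single k 1 : Fin K → ℝ) := by
    intro t
    funext j
    rcases eq_or_ne j k with rfl | h
    · simp [hc]
    · simp [Function.update_of_ne h, Pi.single_eq_of_ne h]
  have hupd : ∀ t : ℝ, xhat (Function.update bh k t) = x0 + (c - t) • v := by
    intro t
    have harg : Function.update bh k t + ρ • (Matrix.diagonal Qhat).mulVec fhat + ρ • muhat
        = (bh + ρ • (Matrix.diagonal Qhat).mulVec fhat + ρ • muhat)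
          + (t - c) • (Pi.single k 1 : Fin K → ℝ) := by
      rw [hb t]; abel
    show -(Bul.mulVec _) + D⁻¹ • Γ⁻¹.mulVec 1 = _
    rw [harg, Matrix.mulVec_add, Matrix.mulVec_smul, hx0]
    show _ = -(Bul.mulVec (bh + ρ • (Matrix.diagonal Qhat).mulVec fhat + ρ • muhat))
          + D⁻¹ • Γ⁻¹.mulVec 1 + (c - t) • v
    rw [hv]
    module
  constructor
  · -- transportation cost
    have hT : (fun t : ℝ => ΦT (Function.update bh k t)) =
        fun t : ℝ => (v ⬝ᵥ abar.mulVec v - Pi.single k 1 ⬝ᵥ v) * (t - c)^2 +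
          (-(v ⬝ᵥ abar.mulVec x0) - x0 ⬝ᵥ abar.mulVec v - bh ⬝ᵥ v + Pi.single k 1 ⬝ᵥ x0)
            * (t - c) + ΦT bh := by
      funext t
      show xhat (Function.update bh k t) ⬝ᵥ abar.mulVec (xhat (Function.update bh k t))
            + Function.update bh k t ⬝ᵥ xhat (Function.update bh k t) = _
      rw [hupd t, hb t]
      show _ = _ + _ + (x0 ⬝ᵥ abar.mulVec x0 + bh ⬝ᵥ x0)
      simp only [Matrix.mulVec_add, Matrix.mulVec_smul, dotProduct_add, add_dotProduct,
        dotProduct_smul, smul_dotProduct, smul_eq_mul]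
      ring
    rw [hT]
    have hval : x0 k - ((2 : ℝ) • abar.mulVec x0 + bh) ⬝ᵥ v
        = -(v ⬝ᵥ abar.mulVec x0) - x0 ⬝ᵥ abar.mulVec v - bh ⬝ᵥ v + Pi.single k 1 ⬝ᵥ x0 := by
      have h1 : x0 ⬝ᵥ abar.mulVec v = abar.mulVec x0 ⬝ᵥ v := by
        rw [Matrix.dotProduct_mulVec, ← Matrix.mulVec_transpose, habar]
      have h2 : v ⬝ᵥ abar.mulVec x0 = abar.mulVec x0 ⬝ᵥ v := dotProduct_comm _ _
      have h3 : Pi.single k (1:ℝ) ⬝ᵥ x0 = x0 k := by simp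
      rw [h1, h2, h3, add_dotProduct, smul_dotProduct, smul_eq_mul]
      ring
    rw [hval]
    exact quadDeriv _ _ _ _
  · -- power cost
    have hlam : lamhat bh ⬝ᵥ v = ∑ j, (Qhat j * (ρ * x0 j + fhat j) + muhat j) * v j := by
      show ((Matrix.diagonal Qhat).mulVec (ρ • x0 + fhat) + muhat) ⬝ᵥ v = _
      simp [dotProduct, Matrix.mulVec_diagonal]
    have hP : (fun t : ℝ => ΦP (Function.update bh k t)) =
        fun t : ℝ => (∑ j, (1/2) * Qhat j * ρ^2 * (v j)^2) * (t - c)^2 +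
          (-(ρ * (lamhat bh ⬝ᵥ v))) * (t - c) + ΦP bh := by
      funext t
      show (∑ j, ((1 / 2) * Qhat j * (ρ * xhat (Function.update bh k t) j + fhat j) ^ 2 +
          muhat j * (ρ * xhat (Function.update bh k t) j + fhat j))) = _
      rw [hupd t, hlam]
      show _ = _ + _ + ∑ j, ((1 / 2) * Qhat j * (ρ * x0 j + fhat j) ^ 2 +
          muhat j * (ρ * x0 j + fhat j))
      rw [Finset.sum_mul, neg_mul, Finset.mul_sum, Finset.sum_mul, ← Finset.sum_neg_distrib,
        ← Finset.sum_add_distrib, ← Finset.sum_add_distrib]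
      refine Finset.sum_congr rfl fun j _ => ?_
      simp only [Pi.add_apply, Pi.smul_apply, smul_eq_mul]
      ring
    rw [hP]
    exact quadDeriv _ _ _ _
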